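/- arXiv:1910.04231 — 6 statements merged into one kernel-verified Lean document; each statement's English description precedes it below -/
import Mathlib

section
/- Let q > 1 be a real number. For every real number t with |t| < q, the family (1 - q^{-k} t)^{-1}, indexed by integers k ≥ 1, is multipliable, the series ∑_{i=1}^∞ (1/(q^i - 1)) · t^i / i converges, and exp( ∑_{i=1}^∞ (1/(q^i - 1)) · t^i / i ) = ∏_{k=1}^∞ (1 - q^{-k} t)^{-1}. (This is the product formula for the zeta function of the classifying stack BG_m over F_q, whose groupoid point count over F_{q^i} is 1/(q^i - 1).) -/
set_option maxHeartbeats 1000000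

open Real

/-- Product formula for the zeta function of the classifying stack `B𝔾ₘ` over `𝔽_q`:
for a real `q > 1` and real `t` with `|t| < q`, the family `(1 - q^{-k} t)⁻¹` for `k ≥ 1`
is multipliable, the series `∑_{i≥1} (1/(q^i - 1)) tⁱ/i` converges, and
`exp(∑_{i≥1} (1/(q^i-1)) tⁱ/i) = ∏_{k≥1} (1 - q^{-k} t)⁻¹`. -/
theorem zeta_BGm_product_formula (q : ℝ) (hq : 1 < q) (t : ℝ) (ht : |t| < q) :
    Multipliable (fun k : ℕ => (1 - q ^ (-((k : ℤ) + 1)) * t)⁻¹) ∧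
    Summable (fun i : ℕ => (1 / (q ^ (i + 1) - 1)) * t ^ (i + 1) / (i + 1)) ∧
    Real.exp (∑' i : ℕ, (1 / (q ^ (i + 1) - 1)) * t ^ (i + 1) / (i + 1)) =
      ∏' k : ℕ, (1 - q ^ (-((k : ℤ) + 1)) * t)⁻¹ := by
  have hq0 : (0:ℝ) < q := lt_trans one_pos hq
  set a : ℕ → ℝ := fun k => q ^ (-((k : ℤ) + 1)) * t with ha
  have hzpow : ∀ k : ℕ, q ^ (-((k : ℤ) + 1)) = (q ^ (k + 1))⁻¹ := by
    intro k
    rw [show -((k : ℤ) + 1) = -((k + 1 : ℕ) : ℤ) by push_cast; ring, zpow_neg, zpow_natCast]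
  have habs : ∀ k : ℕ, |a k| ≤ (q⁻¹)^k * (|t| / q) := by
    intro k
    have h1 : |a k| = (q ^ (k + 1))⁻¹ * |t| := by
      rw [ha, abs_mul, hzpow k, abs_of_pos (inv_pos.mpr (pow_pos hq0 _))]
    rw [h1, pow_succ]
    rw [mul_inv, inv_pow]
    ring_nf
    exact le_refl _
  have hu1 : |t| / q < 1 := (div_lt_one hq0).mpr ht
  have hu0 : 0 ≤ |t| / q := div_nonneg (abs_nonneg t) hq0.le
  have habs1 : ∀ k : ℕ, |a k| < 1 := by
    intro k
    refine lt_of_le_of_lt (habs k) ?_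
    calc (q⁻¹)^k * (|t| / q) ≤ 1 * (|t| / q) := by
          apply mul_le_mul_of_nonneg_right _ hu0
          exact pow_le_one₀ (inv_nonneg.mpr hq0.le) (inv_le_one_of_one_le₀ hq.le)
      _ = |t| / q := one_mul _
      _ < 1 := hu1
  have hpos : ∀ k : ℕ, 0 < 1 - a k := fun k =>
    sub_pos.mpr (lt_of_le_of_lt (le_abs_self _) (habs1 k))
  -- the double-indexed family
  set F : ℕ × ℕ → ℝ := fun p => a p.1 ^ (p.2 + 1) / (p.2 + 1) with hFdef
  have hFsumm : Summable F := by
    have hg : Summable (fun p : ℕ × ℕ => (q⁻¹)^p.1 * (|t|/q)^(p.2+1)) := by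
      have h1 : Summable (fun k : ℕ => (q⁻¹)^k) :=
        summable_geometric_of_lt_one (inv_nonneg.mpr hq0.le)
          (inv_lt_one_of_one_lt₀ hq)
      have h2 : Summable (fun i : ℕ => (|t|/q)^(i+1)) := by
        simpa [pow_succ'] using (summable_geometric_of_lt_one hu0 hu1).mul_left (|t|/q)
      exact h1.mul_of_nonneg h2 (fun k => pow_nonneg (inv_nonneg.mpr hq0.le) _)
        (fun i => pow_nonneg hu0 _)
    refine Summable.of_norm_bounded hg ?_
    rintro ⟨k, i⟩
    have h1 : ‖F (k, i)‖ ≤ |a k| ^ (i+1) := by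
      rw [hFdef]
      simp only [norm_div, norm_pow, Real.norm_eq_abs]
      refine div_le_of_le_mul₀ ?_ (pow_nonneg (abs_nonneg _) _) ?_
      · positivity
      · nlinarith [pow_nonneg (abs_nonneg (a k)) (i+1),
          abs_nonneg ((i:ℝ)+1), Nat.cast_nonneg (α := ℝ) i, abs_of_nonneg
          (show (0:ℝ) ≤ (i:ℝ)+1 by positivity)]
    refine h1.trans ?_
    calc |a k| ^ (i+1) ≤ ((q⁻¹)^k * (|t|/q)) ^ (i+1) :=
          pow_le_pow_left₀ (abs_nonneg _) (habs k) _
      _ = ((q⁻¹)^k)^(i+1) * (|t|/q)^(i+1) := mul_pow _ _ _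
      _ ≤ (q⁻¹)^k * (|t|/q)^(i+1) := by
          apply mul_le_mul_of_nonneg_right _ (pow_nonneg hu0 _)
          exact pow_le_of_le_one (pow_nonneg (inv_nonneg.mpr hq0.le) _)
            (pow_le_one₀ (inv_nonneg.mpr hq0.le) (inv_le_one_of_one_le₀ hq.le))
            (Nat.succ_ne_zero i)
  set s : ℝ := ∑' p, F p with hs
  have hS : HasSum F s := hFsumm.hasSum
  -- fiberwise over k : log of each factor
  have hfiber_k : ∀ k : ℕ, HasSum (fun i => F (k, i)) (Real.log ((1 - a k)⁻¹)) := by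
    intro k
    rw [Real.log_inv]
    exact Real.hasSum_pow_div_log_of_abs_lt_one (habs1 k)
  have hlog : HasSum (fun k => Real.log ((1 - a k)⁻¹)) s :=
    hS.prod_fiberwise hfiber_k
  -- fiberwise over i : geometric sum in k
  have hSswap : HasSum (fun p : ℕ × ℕ => F p.swap) s := by
    have h1 : Summable (fun p : ℕ × ℕ => F p.swap) := hFsumm.prod_symm
    have h2 : ∑' p : ℕ × ℕ, F p.swap = s := by
      rw [hs]
      simpa using (Equiv.prodComm ℕ ℕ).tsum_eq F
    exact h2 ▸ h1.hasSum
  have hfiber_i : ∀ i : ℕ,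
      HasSum (fun k => F (k, i)) ((1 / (q ^ (i + 1) - 1)) * t ^ (i + 1) / (i + 1)) := by
    intro i
    set r : ℝ := (q ^ (i+1))⁻¹ with hr
    have hr0 : 0 ≤ r := inv_nonneg.mpr (pow_pos hq0 _).le
    have hr1 : r < 1 := inv_lt_one_of_one_lt₀ (one_lt_pow₀ hq (Nat.succ_ne_zero i))
    have hgeo : HasSum (fun k : ℕ => r ^ (k+1)) (r * (1 - r)⁻¹) := by
      simpa [pow_succ'] using (hasSum_geometric_of_lt_one hr0 hr1).mul_left r
    have key : HasSum (fun k : ℕ => r ^ (k+1) * (t ^ (i+1) / (i+1)))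
        (r * (1 - r)⁻¹ * (t ^ (i+1) / (i+1))) := hgeo.mul_right _
    have heq : ∀ k : ℕ, F (k, i) = r ^ (k+1) * (t ^ (i+1) / (i+1)) := by
      intro k
      rw [hFdef]
      simp only [ha]
      rw [hzpow k, mul_pow, hr, inv_pow, inv_pow, ← pow_mul, ← pow_mul, Nat.mul_comm]
      ring
    have hsumeq : r * (1 - r)⁻¹ * (t ^ (i+1) / (i+1)) =
        (1 / (q ^ (i + 1) - 1)) * t ^ (i + 1) / (i + 1) := by
      have hqi : (q:ℝ) ^ (i+1) ≠ 0 := (pow_pos hq0 _).ne'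
      have hqi1 : (q:ℝ) ^ (i+1) - 1 ≠ 0 :=
        sub_ne_zero.mpr (one_lt_pow₀ hq (Nat.succ_ne_zero i)).ne'
      rw [hr]
      field_simp
    rw [← hsumeq, show (fun k : ℕ => F (k, i)) = fun k => r ^ (k+1) * (t ^ (i+1) / (i+1))
      from funext heq]
    exact key
  have htarget : HasSum (fun i : ℕ => (1 / (q ^ (i + 1) - 1)) * t ^ (i + 1) / (i + 1)) s :=
    hSswap.prod_fiberwise fun i => by simpa using hfiber_i i
  -- the product
  have hprod : HasProd (fun k : ℕ => (1 - a k)⁻¹) (Real.exp s) := by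
    refine hlog.rexp.congr_fun fun k => ?_
    exact (Real.exp_log (inv_pos.mpr (hpos k))).symm
  refine ⟨hprod.multipliable, htarget.summable, ?_⟩
  rw [htarget.tsum_eq, hprod.tprod_eq]
end

section
/- Let q > 1 be a real number. For every real number t with |t| < 1, exp( ∑_{i=1}^∞ (q t)^i / (i (q^i - 1)) ) = (1 - t)^{-1} · exp( ∑_{i=1}^∞ t^i / (i (q^i - 1)) ). (This is the functional equation ζ_{BG_m}(qt) = (1-t)^{-1} ζ_{BG_m}(t) for the zeta function of the classifying stack BG_m.) -/
/-- Functional equation `ζ_{B𝔾ₘ}(qt) = (1-t)⁻¹ ζ_{B𝔾ₘ}(t)` for the zeta function of the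
classifying stack `B𝔾ₘ`, where `ζ_{B𝔾ₘ}(t) = exp(∑_{i≥1} tⁱ/(i(qⁱ-1)))`. -/
theorem zeta_BGm_functional_equation (q : ℝ) (hq : 1 < q) (t : ℝ) (ht : |t| < 1) :
    Real.exp (∑' i : ℕ, (q * t) ^ (i + 1) / ((i + 1) * (q ^ (i + 1) - 1))) =
      (1 - t)⁻¹ * Real.exp (∑' i : ℕ, t ^ (i + 1) / ((i + 1) * (q ^ (i + 1) - 1))) := by
  have hq0 : (0:ℝ) < q - 1 := by linarith
  have hqn : ∀ i : ℕ, (0:ℝ) < q ^ (i + 1) - 1 := by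
    intro i
    have : (1:ℝ) < q ^ (i + 1) := one_lt_pow₀ hq (Nat.succ_ne_zero i)
    linarith
  -- summability of the B-series
  have hB : Summable (fun i : ℕ => t ^ (i + 1) / ((i + 1) * (q ^ (i + 1) - 1))) := by
    apply Summable.of_norm_bounded (g := fun i : ℕ => |t| ^ i * (q - 1)⁻¹)
    · exact (summable_geometric_of_lt_one (abs_nonneg t) ht).mul_right _
    · intro i
      have h1 : (0:ℝ) < (i + 1 : ℝ) * (q ^ (i + 1) - 1) := by
        apply mul_pos _ (hqn i)
        positivity
      rw [Real.norm_eq_abs, abs_div, abs_of_pos h1, abs_pow, div_eq_mul_inv]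
      apply mul_le_mul
      · calc |t| ^ (i + 1) ≤ |t| ^ i := pow_le_pow_of_le_one (abs_nonneg t) ht.le (by omega)
          _ = |t| ^ i := rfl
      · apply inv_anti₀ hq0
        have h2 : q - 1 ≤ q ^ (i + 1) - 1 := by
          have : q ≤ q ^ (i + 1) := le_self_pow₀ (by linarith) (Nat.succ_ne_zero i)
          linarith
        calc q - 1 = 1 * (q - 1) := (one_mul _).symm
          _ ≤ (i + 1 : ℝ) * (q ^ (i + 1) - 1) := by
              apply mul_le_mul _ h2 hq0.le (by positivity)
              exact_mod_cast Nat.one_le_iff_ne_zero.mpr (Nat.succ_ne_zero i)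
      · positivity
      · positivity
  have hL : HasSum (fun i : ℕ => t ^ (i + 1) / (i + 1)) (-Real.log (1 - t)) :=
    Real.hasSum_pow_div_log_of_abs_lt_one ht
  -- termwise identity
  have key : ∀ i : ℕ, (q * t) ^ (i + 1) / ((i + 1) * (q ^ (i + 1) - 1)) =
      t ^ (i + 1) / (i + 1) + t ^ (i + 1) / ((i + 1) * (q ^ (i + 1) - 1)) := by
    intro i
    have h1 : ((i:ℝ) + 1) ≠ 0 := by positivity
    have h2 : q ^ (i + 1) - 1 ≠ 0 := (hqn i).ne'
    field_simp
    ring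
  have hA : HasSum (fun i : ℕ => (q * t) ^ (i + 1) / ((i + 1) * (q ^ (i + 1) - 1)))
      (-Real.log (1 - t) + ∑' i : ℕ, t ^ (i + 1) / ((i + 1) * (q ^ (i + 1) - 1))) := by
    have := hL.add hB.hasSum
    simpa only [← key] using this
  rw [hA.tsum_eq, Real.exp_add, Real.exp_neg, Real.exp_log (by cases abs_lt.mp ht; linarith)]
end

section
/- Let q > 1 be a real number, let r ≥ 1 be a natural number, let d_1, …, d_r be natural numbers with each d_j ≥ 1, and let D be a natural number. For every real number t with |t| < q^D: the family (1 - q^{-(k_1 d_1 + ⋯ + k_r d_r + D - (d_1 + ⋯ + d_r))} t)^{-1}, indexed by tuples (k_1, …, k_r) of positive integers, is multipliable, and exp( ∑_{i=1}^∞ (t^i / i) · q^{-iD} ∏_{j=1}^r (1 - q^{-i d_j})^{-1} ) = ∏_{k_1=1}^∞ ⋯ ∏_{k_r=1}^∞ (1 - q^{-(k_1 d_1 + ⋯ + k_r d_r + D - (d_1 + ⋯ + d_r))} t)^{-1}. (This is the zeta function formula ζ_{BG}(t) = ∏_{k_1,…,k_r ≥ 1} (1 - q^{-(∑_j k_j d_j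 + dim G - ∑_j d_j)} t)^{-1} for a Chevalley group scheme G of rank r, dimension D, with Weyl group invariant degrees d_1, …, d_r.) -/
open Finset Real

/-- Geometric series over tuples: `∑_{k : Fin n → ℕ} x^{∑ k_j d_j} = ∏_j (1 - x^{d_j})⁻¹`. -/
lemma geomPi (n : ℕ) (d : Fin n → ℕ) (hd : ∀ j, 1 ≤ d j) (x : ℝ) (hx0 : 0 ≤ x) (hx1 : x < 1) :
    HasSum (fun k : Fin n → ℕ => x ^ ∑ j, k j * d j) (∏ j, (1 - x ^ d j)⁻¹) := by
  induction n with
  | zero =>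
      have h : HasSum (fun k : Fin 0 → ℕ => x ^ ∑ j, k j * d j)
          ((fun k : Fin 0 → ℕ => x ^ ∑ j, k j * d j) default) :=
        hasSum_single default (fun b hb => absurd (Subsingleton.elim b default) hb)
      simpa using h
  | succ n ih =>
      have h0 : HasSum (fun m : ℕ => (x ^ d 0) ^ m) (1 - x ^ d 0)⁻¹ :=
        hasSum_geometric_of_lt_one (pow_nonneg hx0 _)
          (pow_lt_one₀ hx0 hx1 (Nat.one_le_iff_ne_zero.mp (hd 0)))
      have hIH := ih (fun j => d j.succ) (fun j => hd j.succ)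
      have hs : Summable (fun p : ℕ × (Fin n → ℕ) =>
          (x ^ d 0) ^ p.1 * x ^ ∑ j, p.2 j * d j.succ) :=
        Summable.mul_of_nonneg (f := fun m : ℕ => (x ^ d 0) ^ m)
          (g := fun k : Fin n → ℕ => x ^ ∑ j, k j * d j.succ) h0.summable hIH.summable
          (fun m => pow_nonneg (pow_nonneg hx0 _) _) (fun k => pow_nonneg hx0 _)
      have hmul : HasSum (fun p : ℕ × (Fin n → ℕ) =>
            (x ^ d 0) ^ p.1 * x ^ ∑ j, p.2 j * d j.succ)
          ((1 - x ^ d 0)⁻¹ * ∏ j : Fin n, (1 - x ^ d j.succ)⁻¹) :=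
        HasSum.mul (f := fun m : ℕ => (x ^ d 0) ^ m)
          (g := fun k : Fin n → ℕ => x ^ ∑ j, k j * d j.succ) h0 hIH hs
      have h2 := (((Fin.consEquiv (fun _ => ℕ)).symm).hasSum_iff).mpr hmul
      rw [Fin.prod_univ_succ]
      have hfun : (fun k : Fin (n + 1) → ℕ => x ^ ∑ j, k j * d j)
          = ((fun p : ℕ × (Fin n → ℕ) => (x ^ d 0) ^ p.1
              * x ^ ∑ j, p.2 j * d j.succ) ∘ ((Fin.consEquiv (fun _ => ℕ)).symm)) := by
        funext k
        simp only [Function.comp_apply, Fin.consEquiv_symm_apply]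
        rw [Fin.sum_univ_succ, pow_add, mul_comm (k 0) (d 0), pow_mul]
        rfl
      rw [hfun]
      exact h2
lemma zetaAux (q : ℝ) (hq : 1 < q) (r : ℕ) (d : Fin r → ℕ) (hd : ∀ j, 1 ≤ d j) (D : ℕ)
    (t : ℝ) (ht : |t| < q ^ D) :
    HasProd (fun k : Fin r → ℕ => (1 - q ^ (-(((∑ j, k j * d j : ℕ) : ℤ) + (D : ℤ))) * t)⁻¹)
      (Real.exp (∑' i : ℕ, (t ^ (i + 1) / (i + 1)) *
        (q ^ (-(((i : ℤ) + 1) * (D : ℤ))) *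
          ∏ j, (1 - q ^ (-(((i : ℤ) + 1) * (d j : ℤ))))⁻¹))) := by
  have hq0 : (0:ℝ) < q := lt_trans one_pos hq
  have hqne : q ≠ 0 := hq0.ne'
  have hfabs : ∀ k : Fin r → ℕ,
      |q ^ (-(((∑ j, k j * d j : ℕ) : ℤ) + (D : ℤ))) * t|
        = (q⁻¹) ^ (∑ j, k j * d j) * (q ^ (-(D : ℤ)) * |t|) := by
    intro k
    rw [abs_mul, abs_of_pos (zpow_pos hq0 _), neg_add, zpow_add₀ hqne,
      zpow_neg q (((∑ j, k j * d j : ℕ) : ℤ)), zpow_natCast, ← inv_pow]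
    ring
  have hc0 : 0 ≤ q ^ (-(D : ℤ)) * |t| := mul_nonneg (zpow_pos hq0 _).le (abs_nonneg t)
  have hc1 : q ^ (-(D : ℤ)) * |t| < 1 := by
    have h1 : q ^ (-(D : ℤ)) * |t| < q ^ (-(D : ℤ)) * q ^ D :=
      mul_lt_mul_of_pos_left ht (zpow_pos hq0 _)
    have h2 : q ^ (-(D : ℤ)) * q ^ D = 1 := by
      rw [zpow_neg, zpow_natCast]
      field_simp
    linarith
  have hx0 : (0:ℝ) ≤ q⁻¹ := inv_nonneg.mpr hq0.le
  have hx1 : q⁻¹ < 1 := inv_lt_one_of_one_lt₀ hq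
  have hxle1 : ∀ k : Fin r → ℕ, (q⁻¹) ^ (∑ j, k j * d j) ≤ 1 :=
    fun k => pow_le_one₀ hx0 hx1.le
  have habs : ∀ k : Fin r → ℕ, |q ^ (-(((∑ j, k j * d j : ℕ) : ℤ) + (D : ℤ))) * t| < 1 := by
    intro k
    rw [hfabs k]
    exact lt_of_le_of_lt (by simpa using mul_le_mul_of_nonneg_right (hxle1 k) hc0) hc1
  have hpos : ∀ k : Fin r → ℕ, 0 < 1 - q ^ (-(((∑ j, k j * d j : ℕ) : ℤ) + (D : ℤ))) * t := by
    intro k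
    have := (abs_lt.mp (habs k)).2
    linarith
  have hgeomK := geomPi r d hd q⁻¹ hx0 hx1
  have hgeomI : Summable (fun i : ℕ => (q ^ (-(D : ℤ)) * |t|) ^ (i + 1)) := by
    have := (summable_geometric_of_lt_one hc0 hc1).mul_left (q ^ (-(D : ℤ)) * |t|)
    exact this.congr fun i => (pow_succ' _ _).symm
  have hF : Summable (fun p : ℕ × (Fin r → ℕ) =>
      (q ^ (-(((∑ j, p.2 j * d j : ℕ) : ℤ) + (D : ℤ))) * t) ^ (p.1 + 1) / ((p.1 : ℝ) + 1)) := by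
    have hG : Summable (fun p : ℕ × (Fin r → ℕ) =>
        (q ^ (-(D : ℤ)) * |t|) ^ (p.1 + 1) * (q⁻¹) ^ ∑ j, p.2 j * d j) :=
      Summable.mul_of_nonneg (f := fun i : ℕ => (q ^ (-(D : ℤ)) * |t|) ^ (i + 1))
        (g := fun k : Fin r → ℕ => (q⁻¹) ^ ∑ j, k j * d j) hgeomI hgeomK.summable
        (fun i => pow_nonneg hc0 _) (fun k => pow_nonneg hx0 _)
    refine Summable.of_abs (Summable.of_nonneg_of_le (fun p => abs_nonneg _) (fun p => ?_) hG)
    obtain ⟨i, k⟩ := p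
    rw [abs_div, abs_pow, abs_of_pos (show (0:ℝ) < (i : ℝ) + 1 by positivity), hfabs k]
    have h1 : ((q⁻¹) ^ (∑ j, k j * d j) * (q ^ (-(D : ℤ)) * |t|)) ^ (i + 1) / ((i : ℝ) + 1)
        ≤ ((q⁻¹) ^ (∑ j, k j * d j) * (q ^ (-(D : ℤ)) * |t|)) ^ (i + 1) :=
      div_le_self (by positivity) (by norm_num)
    refine h1.trans ?_
    rw [mul_pow]
    have h2 : ((q⁻¹) ^ (∑ j, k j * d j)) ^ (i + 1) ≤ (q⁻¹) ^ (∑ j, k j * d j) :=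
      pow_le_of_le_one (pow_nonneg hx0 _) (hxle1 k) (Nat.succ_ne_zero i)
    calc ((q⁻¹) ^ (∑ j, k j * d j)) ^ (i + 1) * (q ^ (-(D : ℤ)) * |t|) ^ (i + 1)
        ≤ (q⁻¹) ^ (∑ j, k j * d j) * (q ^ (-(D : ℤ)) * |t|) ^ (i + 1) :=
          mul_le_mul_of_nonneg_right h2 (pow_nonneg hc0 _)
      _ = (q ^ (-(D : ℤ)) * |t|) ^ (i + 1) * (q⁻¹) ^ (∑ j, k j * d j) := mul_comm _ _
  have hrow : ∀ i : ℕ, HasSum (fun k : Fin r → ℕ =>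
      (q ^ (-(((∑ j, k j * d j : ℕ) : ℤ) + (D : ℤ))) * t) ^ (i + 1) / ((i : ℝ) + 1))
      ((t ^ (i + 1) / ((i : ℝ) + 1)) * (q ^ (-(((i : ℤ) + 1) * (D : ℤ))) *
        ∏ j, (1 - q ^ (-(((i : ℤ) + 1) * (d j : ℤ))))⁻¹)) := by
    intro i
    have hy0 : (0:ℝ) ≤ q ^ (-((i : ℤ) + 1)) := (zpow_pos hq0 _).le
    have hy1 : q ^ (-((i : ℤ) + 1)) < 1 := by
      rw [zpow_neg]
      exact inv_lt_one_of_one_lt₀ (one_lt_zpow₀ hq (by positivity))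
    have hgeo := geomPi r d hd _ hy0 hy1
    have hP : ∀ j : Fin r, (q ^ (-((i : ℤ) + 1))) ^ (d j)
        = q ^ (-(((i : ℤ) + 1) * (d j : ℤ))) := by
      intro j
      rw [← zpow_natCast (q ^ (-((i : ℤ) + 1))), ← zpow_mul]
      ring_nf
    have hterm : ∀ k : Fin r → ℕ,
        (q ^ (-(((∑ j, k j * d j : ℕ) : ℤ) + (D : ℤ))) * t) ^ (i + 1) / ((i : ℝ) + 1)
          = (t ^ (i + 1) / ((i : ℝ) + 1) * q ^ (-(((i : ℤ) + 1) * (D : ℤ))))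
              * (q ^ (-((i : ℤ) + 1))) ^ (∑ j, k j * d j) := by
      intro k
      have e1 : (q ^ (-(((∑ j, k j * d j : ℕ) : ℤ) + (D : ℤ)))) ^ (i + 1)
          = q ^ (-(((i : ℤ) + 1) * (D : ℤ))) * (q ^ (-((i : ℤ) + 1))) ^ (∑ j, k j * d j) := by
        rw [← zpow_natCast (q ^ (-(((∑ j, k j * d j : ℕ) : ℤ) + (D : ℤ)))), ← zpow_mul,
          ← zpow_natCast (q ^ (-((i : ℤ) + 1))), ← zpow_mul, ← zpow_add₀ hqne]
        congr 1
        push_cast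
        ring
      rw [mul_pow, e1]
      ring
    have hmul := hgeo.mul_left (t ^ (i + 1) / ((i : ℝ) + 1) * q ^ (-(((i : ℤ) + 1) * (D : ℤ))))
    have hPP : (∏ j, (1 - (q ^ (-((i : ℤ) + 1))) ^ (d j))⁻¹)
        = ∏ j, (1 - q ^ (-(((i : ℤ) + 1) * (d j : ℤ))))⁻¹ :=
      Finset.prod_congr rfl fun j _ => by rw [hP j]
    rw [hPP] at hmul
    have hfun2 : (fun k : Fin r → ℕ =>
        (q ^ (-(((∑ j, k j * d j : ℕ) : ℤ) + (D : ℤ))) * t) ^ (i + 1) / ((i : ℝ) + 1))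
        = fun k : Fin r → ℕ => (t ^ (i + 1) / ((i : ℝ) + 1) * q ^ (-(((i : ℤ) + 1) * (D : ℤ))))
            * (q ^ (-((i : ℤ) + 1))) ^ (∑ j, k j * d j) := funext hterm
    rw [hfun2, ← mul_assoc]
    exact hmul
  have hcol : ∀ k : Fin r → ℕ, HasSum (fun i : ℕ =>
      (q ^ (-(((∑ j, k j * d j : ℕ) : ℤ) + (D : ℤ))) * t) ^ (i + 1) / ((i : ℝ) + 1))
      (Real.log ((1 - q ^ (-(((∑ j, k j * d j : ℕ) : ℤ) + (D : ℤ))) * t)⁻¹)) := by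
    intro k
    have h := Real.hasSum_pow_div_log_of_abs_lt_one (habs k)
    rwa [← Real.log_inv] at h
  have hsum2 : Summable (fun k : Fin r → ℕ =>
      Real.log ((1 - q ^ (-(((∑ j, k j * d j : ℕ) : ℤ) + (D : ℤ))) * t)⁻¹)) := by
    have hs := (hF.prod_symm).prod
    exact hs.congr fun k => (hcol k).tsum_eq
  have hexp2 := hsum2.hasSum.rexp
  have hcomp : Real.exp ∘ (fun k : Fin r → ℕ =>
      Real.log ((1 - q ^ (-(((∑ j, k j * d j : ℕ) : ℤ) + (D : ℤ))) * t)⁻¹))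
      = fun k : Fin r → ℕ => (1 - q ^ (-(((∑ j, k j * d j : ℕ) : ℤ) + (D : ℤ))) * t)⁻¹ :=
    funext fun k => Real.exp_log (inv_pos.mpr (hpos k))
  rw [hcomp] at hexp2
  have hts : (∑' i : ℕ, (t ^ (i + 1) / ((i : ℝ) + 1)) *
      (q ^ (-(((i : ℤ) + 1) * (D : ℤ))) * ∏ j, (1 - q ^ (-(((i : ℤ) + 1) * (d j : ℤ))))⁻¹))
      = ∑' k : Fin r → ℕ,
          Real.log ((1 - q ^ (-(((∑ j, k j * d j : ℕ) : ℤ) + (D : ℤ))) * t)⁻¹) := by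
    calc (∑' i : ℕ, (t ^ (i + 1) / ((i : ℝ) + 1)) *
        (q ^ (-(((i : ℤ) + 1) * (D : ℤ))) * ∏ j, (1 - q ^ (-(((i : ℤ) + 1) * (d j : ℤ))))⁻¹))
        = ∑' i : ℕ, ∑' k : Fin r → ℕ,
            (q ^ (-(((∑ j, k j * d j : ℕ) : ℤ) + (D : ℤ))) * t) ^ (i + 1) / ((i : ℝ) + 1) :=
          tsum_congr fun i => ((hrow i).tsum_eq).symm
      _ = ∑' k : Fin r → ℕ, ∑' i : ℕ,
            (q ^ (-(((∑ j, k j * d j : ℕ) : ℤ) + (D : ℤ))) * t) ^ (i + 1) / ((i : ℝ) + 1) := by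
          exact (Summable.tsum_comm (f := fun (i : ℕ) (k : Fin r → ℕ) =>
            (q ^ (-(((∑ j, k j * d j : ℕ) : ℤ) + (D : ℤ))) * t) ^ (i + 1) / ((i : ℝ) + 1)) hF).symm
      _ = ∑' k : Fin r → ℕ,
            Real.log ((1 - q ^ (-(((∑ j, k j * d j : ℕ) : ℤ) + (D : ℤ))) * t)⁻¹) :=
          tsum_congr fun k => (hcol k).tsum_eq
  rw [hts]
  exact hexp2

/-- Zeta function of the classifying stack `BG` of a Chevalley group scheme `G` of rank `r ≥ 1`,
dimension `D`, with Weyl group invariant degrees `d_1, …, d_r`: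
`ζ_{BG}(t) = ∏_{k_1,…,k_r ≥ 1} (1 - q^{-(∑ j k_j d_j + D - ∑ j d_j)} t)⁻¹`,
where `#BG(𝔽_{qⁱ}) = q^{-iD} ∏_j (1 - q^{-i d_j})⁻¹`. Positive integer tuples `(k_1,…,k_r)`
are encoded as `k : Fin r → ℕ` via `k_j = k j + 1`. -/
theorem zeta_BG_chevalley (q : ℝ) (hq : 1 < q) (r : ℕ) (hr : 1 ≤ r) (d : Fin r → ℕ)
    (hd : ∀ j, 1 ≤ d j) (D : ℕ) (t : ℝ) (ht : |t| < q ^ D) :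
    Multipliable (fun k : Fin r → ℕ =>
      (1 - q ^ (-((∑ j, ((k j : ℤ) + 1) * (d j : ℤ)) + (D : ℤ) - ∑ j, (d j : ℤ))) * t)⁻¹) ∧
    Real.exp (∑' i : ℕ, (t ^ (i + 1) / (i + 1)) *
        (q ^ (-(((i : ℤ) + 1) * (D : ℤ))) *
          ∏ j, (1 - q ^ (-(((i : ℤ) + 1) * (d j : ℤ))))⁻¹)) =
      ∏' k : Fin r → ℕ,
        (1 - q ^ (-((∑ j, ((k j : ℤ) + 1) * (d j : ℤ)) + (D : ℤ) - ∑ j, (d j : ℤ))) * t)⁻¹ := by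
  have key : ∀ k : Fin r → ℕ,
      -((∑ j, ((k j : ℤ) + 1) * (d j : ℤ)) + (D : ℤ) - ∑ j, (d j : ℤ))
        = -(((∑ j, k j * d j : ℕ) : ℤ) + (D : ℤ)) := by
    intro k
    have h1 : (∑ j, ((k j : ℤ) + 1) * (d j : ℤ))
        = (∑ j, (k j : ℤ) * (d j : ℤ)) + ∑ j, (d j : ℤ) := by
      rw [← Finset.sum_add_distrib]
      exact Finset.sum_congr rfl fun j _ => by ring
    have h2 : ((∑ j, k j * d j : ℕ) : ℤ) = ∑ j, (k j : ℤ) * (d j : ℤ) := by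
      push_cast
      rfl
    rw [h1, h2]
    ring
  simp only [key]
  have H := zetaAux q hq r d hd D t ht
  exact ⟨H.multipliable, H.tprod_eq.symm⟩
end

section
/- Let n ≥ 1 be a natural number, let F be a finite field with q elements, and let SL_{n+1}(F) denote the special linear group of (n+1)×(n+1) matrices over F with determinant 1. Then the family of real numbers q^{-(2 i_1 + 3 i_2 + ⋯ + (n+1) i_n + n(n+2))}, indexed by tuples (i_1, …, i_n) ∈ ℕ^n, is summable and ∑_{(i_1,…,i_n) ∈ ℕ^n} q^{-(2 i_1 + 3 i_2 + ⋯ + (n+1) i_n + n(n+2))} = 1 / (Nat.card SL_{n+1}(F)). (This expresses that the groupoid cardinality # B SL_{n+1}(F_q), computed cohomologically by the trace formula, equals the reciprocal of the order of the finite group SL_{n+1}(F_q).) -/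
open Finset Matrix

lemma my_zpow_sum {α : Type*} (x : ℝ) (hx : x ≠ 0) (s : Finset α) (f : α → ℤ) :
    x ^ (∑ a ∈ s, f a) = ∏ a ∈ s, x ^ f a := by
  classical
  induction s using Finset.induction with
  | empty => simp
  | @insert a s h ih => rw [Finset.sum_insert h, Finset.prod_insert h, zpow_add₀ hx, ih]

lemma my_hasSum_pi_prod : ∀ {n : ℕ} (f : Fin n → ℕ → ℝ) (a : Fin n → ℝ),
    (∀ j, HasSum (f j) (a j)) →
    HasSum (fun i : Fin n → ℕ => ∏ j, f j (i j)) (∏ j, a j) := by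
  intro n
  induction n with
  | zero =>
    intro f a _
    simpa using hasSum_fintype (fun i : Fin 0 → ℕ => ∏ j, f j (i j))
  | succ n ih =>
    intro f a h
    have h0 := h 0
    have hrest : HasSum (fun i : Fin n → ℕ => ∏ j : Fin n, f j.succ (i j))
        (∏ j : Fin n, a j.succ) := ih (fun j => f j.succ) (fun j => a j.succ) (fun j => h j.succ)
    have hsumm : Summable (fun p : ℕ × (Fin n → ℕ) =>
        f 0 p.1 * ∏ j : Fin n, f j.succ (p.2 j)) := by
      have := summable_mul_of_summable_norm (R := ℝ)
        (f := f 0) (g := fun i : Fin n → ℕ => ∏ j : Fin n, f j.succ (i j))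
        (summable_norm_iff.2 h0.summable) (summable_norm_iff.2 hrest.summable)
      exact this
    have hmul : HasSum (fun p : ℕ × (Fin n → ℕ) =>
        f 0 p.1 * ∏ j : Fin n, f j.succ (p.2 j))
        (a 0 * ∏ j : Fin n, a j.succ) :=
      HasSum.mul (f := f 0) (g := fun i : Fin n → ℕ => ∏ j : Fin n, f j.succ (i j))
        h0 hrest hsumm
    rw [Fin.prod_univ_succ]
    rw [← (Fin.consEquiv (fun _ : Fin (n + 1) => ℕ)).hasSum_iff]
    convert hmul using 1
    funext p
    simp [Fin.consEquiv, Fin.prod_univ_succ, Function.comp]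

lemma my_card_SL (m : ℕ) (hm : 0 < m) (F : Type) [Field F] [Fintype F] :
    (Fintype.card F - 1) * Nat.card (Matrix.SpecialLinearGroup (Fin m) F) =
      Nat.card (GL (Fin m) F) := by
  classical
  set d : GL (Fin m) F →* Fˣ := Matrix.GeneralLinearGroup.det with hd
  have hker : Nat.card (Matrix.SpecialLinearGroup (Fin m) F) = Nat.card d.ker := by
    refine Nat.card_congr ⟨fun A => ⟨Matrix.SpecialLinearGroup.toGL A, ?_⟩,
      fun g => ⟨((g : GL (Fin m) F) : Matrix (Fin m) (Fin m) F), ?_⟩,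
      fun A => Subtype.ext rfl, fun g => Subtype.ext (Units.ext rfl)⟩
    · exact MonoidHom.mem_ker.mpr (Matrix.SpecialLinearGroup.coeToGL_det A)
    · exact congrArg Units.val (MonoidHom.mem_ker.mp g.2)
  have hsurj : Function.Surjective d := by
    intro u
    set i0 : Fin m := ⟨0, hm⟩
    set M : Matrix (Fin m) (Fin m) F :=
      Matrix.diagonal (Function.update (1 : Fin m → F) i0 (u : F)) with hM
    have hdet : M.det = (u : F) := by
      rw [hM, Matrix.det_diagonal, Finset.prod_update_of_mem (Finset.mem_univ i0)]
      simp
    refine ⟨Matrix.GeneralLinearGroup.mk'' M (hdet ▸ u.isUnit), Units.ext ?_⟩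
    exact hdet
  have h1 : Nat.card d.ker * d.ker.index = Nat.card (GL (Fin m) F) :=
    Subgroup.card_mul_index d.ker
  have h2 : d.ker.index = Nat.card Fˣ := by
    rw [Subgroup.index_ker, MonoidHom.range_eq_top.mpr hsurj, Subgroup.card_top]
  have h3 : Nat.card Fˣ = Fintype.card F - 1 := by
    rw [Nat.card_eq_fintype_card, Fintype.card_units]
  rw [hker, mul_comm, ← h3, ← h2, h1]

lemma my_exp (n : ℕ) :
    (∑ i ∈ Finset.range (n + 1), i) + (∑ j ∈ Finset.range n, (j + 2)) = n * (n + 2) := by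
  induction n with
  | zero => simp
  | succ n ih =>
    rw [Finset.sum_range_succ (fun i => i) (n + 1), Finset.sum_range_succ (fun j => j + 2) n]
    have h : (n + 1) * (n + 1 + 2) = n * (n + 2) + (2 * n + 3) := by ring
    linarith [ih, h]

lemma my_prod_eq (n : ℕ) (Q : ℝ) (hQ1 : 1 < Q) :
    ∏ i ∈ Finset.range (n + 1), (Q ^ (n + 1) - Q ^ i)
      = (Q - 1) * Q ^ (n * (n + 2)) * ∏ j ∈ Finset.range n, (1 - (Q ^ (j + 2))⁻¹) := by
  have hQ0 : Q ≠ 0 := by positivity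
  have hpow : ∀ k : ℕ, (Q ^ k) ≠ 0 := fun k => pow_ne_zero k hQ0
  have l1 : ∏ i ∈ Finset.range (n + 1), (Q ^ (n + 1) - Q ^ i)
      = ∏ i ∈ Finset.range (n + 1), (Q ^ i * (Q ^ (n + 1 - i) - 1)) := by
    refine Finset.prod_congr rfl fun i hi => ?_
    have hle : i ≤ n := by simpa [Nat.lt_succ_iff] using hi
    rw [mul_sub, mul_one, ← pow_add]
    congr 2
    omega
  have l2 : ∏ i ∈ Finset.range (n + 1), (Q ^ (n + 1 - i) - 1)
      = ∏ i ∈ Finset.range (n + 1), (Q ^ (i + 1) - 1) := by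
    rw [← Finset.prod_range_reflect (fun i => Q ^ (i + 1) - 1) (n + 1)]
    refine Finset.prod_congr rfl fun i hi => ?_
    have : i ≤ n := by simpa [Nat.lt_succ_iff] using hi
    congr 2
    omega
  have r1 : ∏ j ∈ Finset.range n, (1 - (Q ^ (j + 2))⁻¹)
      = ∏ j ∈ Finset.range n, ((Q ^ (j + 2) - 1) * (Q ^ (j + 2))⁻¹) := by
    refine Finset.prod_congr rfl fun j _ => ?_
    rw [sub_mul, mul_inv_cancel₀ (hpow _), one_mul]
  have r2 : ∏ i ∈ Finset.range (n + 1), (Q ^ (i + 1) - 1)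
      = (∏ j ∈ Finset.range n, (Q ^ (j + 2) - 1)) * (Q - 1) := by
    rw [Finset.prod_range_succ']
    norm_num
  rw [l1, Finset.prod_mul_distrib, Finset.prod_pow_eq_pow_sum, l2, r1,
    Finset.prod_mul_distrib, Finset.prod_inv_distrib, Finset.prod_pow_eq_pow_sum, r2]
  have : Q ^ (n * (n + 2)) =
      Q ^ (∑ i ∈ Finset.range (n + 1), i) * Q ^ (∑ j ∈ Finset.range n, (j + 2)) := by
    rw [← pow_add, my_exp n]
  rw [this]
  field_simp

/-- The groupoid cardinality `#B SL_{n+1}(𝔽_q)` computed cohomologically by the trace formula,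
namely `∑_{i ∈ ℕⁿ} q^{-(∑_j (j+2) i_j + n(n+2))}`, equals the reciprocal of the order of the
finite group `SL_{n+1}(𝔽_q)`, where `F` is a finite field with `q` elements. -/
theorem B_SL_point_count_eq_card_inv (n : ℕ) (hn : 1 ≤ n) (F : Type) [Field F] [Fintype F]
    (q : ℕ) (hq : Fintype.card F = q) :
    Summable (fun i : Fin n → ℕ =>
      (q : ℝ) ^ (-((∑ j : Fin n, (((j : ℕ) : ℤ) + 2) * (i j : ℤ)) + (n * (n + 2) : ℕ)))) ∧
    ∑' i : Fin n → ℕ,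
        (q : ℝ) ^ (-((∑ j : Fin n, (((j : ℕ) : ℤ) + 2) * (i j : ℤ)) + (n * (n + 2) : ℕ))) =
      1 / (Nat.card (Matrix.SpecialLinearGroup (Fin (n + 1)) F) : ℝ) := by
  have hq2 : 2 ≤ q := hq ▸ Fintype.one_lt_card
  have hQ1 : (1 : ℝ) < (q : ℝ) := by exact_mod_cast Nat.lt_of_lt_of_le one_lt_two hq2
  have hQ0 : (q : ℝ) ≠ 0 := by positivity
  set Q : ℝ := (q : ℝ) with hQdef
  -- the geometric ratios
  set r : Fin n → ℝ := fun j => (Q ^ ((j : ℕ) + 2))⁻¹ with hr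
  have hr0 : ∀ j, 0 ≤ r j := fun j => by positivity
  have hr1 : ∀ j, r j < 1 := fun j => by
    rw [hr]
    exact inv_lt_one_of_one_lt₀ (one_lt_pow₀ (n := (j : ℕ) + 2) hQ1 (by omega))
  have hgeo : ∀ j, HasSum (fun i : ℕ => r j ^ i) ((1 - r j)⁻¹) := fun j =>
    hasSum_geometric_of_lt_one (hr0 j) (hr1 j)
  have H1 : HasSum (fun i : Fin n → ℕ => ∏ j, r j ^ (i j)) (∏ j, (1 - r j)⁻¹) :=
    my_hasSum_pi_prod _ _ hgeo
  have H2 := H1.mul_right ((Q ^ (n * (n + 2)))⁻¹)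
  -- identify the summand
  have hfun : (fun i : Fin n → ℕ =>
      (q : ℝ) ^ (-((∑ j : Fin n, (((j : ℕ) : ℤ) + 2) * (i j : ℤ)) + (n * (n + 2) : ℕ))))
      = fun i : Fin n → ℕ => (∏ j, r j ^ (i j)) * (Q ^ (n * (n + 2)))⁻¹ := by
    funext i
    rw [neg_add, zpow_add₀ hQ0]
    congr 1
    · rw [← Finset.sum_neg_distrib, my_zpow_sum Q hQ0]
      refine Finset.prod_congr rfl fun j _ => ?_
      have : -((((j : ℕ) : ℤ) + 2) * (i j : ℤ)) = (-(((j : ℕ) + 2 : ℕ) : ℤ)) * (i j : ℤ) := by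
        push_cast; ring
      rw [this, _root_.zpow_mul, zpow_natCast, _root_.zpow_neg, zpow_natCast]
    · rw [_root_.zpow_neg, zpow_natCast]
  -- the cardinality identity
  have hnat : (q - 1) * Nat.card (Matrix.SpecialLinearGroup (Fin (n + 1)) F)
      = ∏ i : Fin (n + 1), (q ^ (n + 1) - q ^ (i : ℕ)) := by
    rw [← hq, my_card_SL (n + 1) (Nat.succ_pos n) F, Matrix.card_GL_field]
  set N : ℕ := Nat.card (Matrix.SpecialLinearGroup (Fin (n + 1)) F) with hN
  have hcast : (Q - 1) * (N : ℝ) = ∏ i ∈ Finset.range (n + 1), (Q ^ (n + 1) - Q ^ i) := by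
    calc (Q - 1) * (N : ℝ) = (((q - 1) * N : ℕ) : ℝ) := by
          rw [Nat.cast_mul, Nat.cast_sub (show 1 ≤ q by omega), Nat.cast_one]
      _ = ((∏ i : Fin (n + 1), (q ^ (n + 1) - q ^ (i : ℕ)) : ℕ) : ℝ) := by rw [hnat]
      _ = ∏ i : Fin (n + 1), (Q ^ (n + 1) - Q ^ (i : ℕ)) := by
          rw [Nat.cast_prod]
          refine Finset.prod_congr rfl fun i _ => ?_
          rw [Nat.cast_sub (Nat.pow_le_pow_right (show 1 ≤ q by omega) (le_of_lt i.2))]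
          push_cast
          ring
      _ = ∏ i ∈ Finset.range (n + 1), (Q ^ (n + 1) - Q ^ i) :=
          Fin.prod_univ_eq_prod_range (fun i => Q ^ (n + 1) - Q ^ i) (n + 1)
  have hNval : (N : ℝ) = Q ^ (n * (n + 2)) * ∏ j, (1 - r j) := by
    have hne : Q - 1 ≠ 0 := sub_ne_zero.mpr (ne_of_gt hQ1)
    apply mul_left_cancel₀ hne
    rw [hcast, my_prod_eq n Q hQ1]
    rw [hr]
    rw [Fin.prod_univ_eq_prod_range (fun j => 1 - (Q ^ (j + 2))⁻¹) n]
    ring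
  have hNne : (∏ j : Fin n, (1 - r j)) ≠ 0 := by
    refine Finset.prod_ne_zero_iff.mpr fun j _ => ?_
    have := hr1 j
    intro hc
    rw [sub_eq_zero] at hc
    exact absurd hc.symm (ne_of_lt this)
  constructor
  · rw [hfun]; exact H2.summable
  · rw [hfun, H2.tsum_eq, hNval, Finset.prod_inv_distrib, one_div, mul_inv]
    ring
end

section
/- Let q > 1 be a real number. For every real number t with |t| < q^{14}: the family (1 - q^{-(2 k_1 + 6 k_2 + 6)} t)^{-1}, indexed by pairs (k_1, k_2) of positive integers, is multipliable, and exp( ∑_{i=1}^∞ (t^i / i) · ( q^{14 i} (1 - q^{-2i}) (1 - q^{-6i}) )^{-1} ) = ∏_{k_1=1}^∞ ∏_{k_2=1}^∞ (1 - q^{-(2 k_1 + 6 k_2 + 6)} t)^{-1}. (This is the zeta function formula ζ_{BG_2}(t) = ∏_{k_1,k_2 ≥ 1} (1 - q^{-(2k_1 + 6k_2 + 6)} t)^{-1} for the classifying stack of the exceptional group G_2.) -/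
open Real

lemma eulerAux {ι : Type*} (x : ι → ℝ) (r : ℝ) (hr : r < 1)
    (hxr : ∀ k, |x k| ≤ r) (hs : Summable fun k => |x k|) :
    Multipliable (fun k => (1 - x k)⁻¹) ∧
    Real.exp (∑' (i : ℕ) (k : ι), x k ^ (i + 1) / (i + 1)) = ∏' k, (1 - x k)⁻¹ := by
  have hx1 : ∀ k, |x k| < 1 := fun k => lt_of_le_of_lt (hxr k) hr
  have h1x : ∀ k, 0 < 1 - x k := fun k => by
    have := abs_lt.1 (hx1 k); linarith [this.2]
  have hrpos : 0 < 1 - r := by linarith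
  have hbound : ∀ (k : ι) (i : ℕ), |x k ^ (i + 1) / ((i : ℝ) + 1)| ≤ |x k| * |x k| ^ i := by
    intro k i
    rw [abs_div, abs_pow, abs_of_pos (by positivity : (0:ℝ) < (i : ℝ) + 1)]
    calc |x k| ^ (i + 1) / ((i : ℝ) + 1) ≤ |x k| ^ (i + 1) / 1 := by
          apply div_le_div_of_nonneg_left (by positivity) one_pos
          exact_mod_cast Nat.one_le_iff_ne_zero.mpr (Nat.succ_ne_zero i)
      _ = |x k| * |x k| ^ i := by rw [div_one, pow_succ']
  have hgs : ∀ k : ι, Summable fun i : ℕ => |x k| * |x k| ^ i := fun k =>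
    (summable_geometric_of_lt_one (abs_nonneg _) (hx1 k)).mul_left _
  have hlogb : ∀ k, |Real.log (1 - x k)| ≤ |x k| / (1 - r) := by
    intro k
    have h0 := Real.abs_log_sub_add_sum_range_le (hx1 k) 0
    simp only [Finset.range_zero, Finset.sum_empty, zero_add, pow_one] at h0
    refine h0.trans ?_
    exact div_le_div_of_nonneg_left (abs_nonneg _) hrpos (by linarith [hxr k])
  have hslog : Summable fun k => Real.log ((1 - x k)⁻¹) := by
    have : Summable fun k => Real.log (1 - x k) := by
      refine (summable_abs_iff.mp ?_)
      exact Summable.of_nonneg_of_le (fun k => abs_nonneg _) hlogb (hs.div_const _)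
    simpa [Real.log_inv] using this.neg
  have hpos : ∀ (_ : Unit) (k : ι), 0 < (1 - x k)⁻¹ := fun _ k => inv_pos.mpr (h1x k)
  have hmult : Multipliable (fun k => (1 - x k)⁻¹) :=
    Real.multipliable_of_summable_log (hpos ()) hslog
  refine ⟨hmult, ?_⟩
  have hprod := Real.rexp_tsum_eq_tprod (hpos ()) hslog
  rw [← hprod]
  congr 1
  have hF : Summable (Function.uncurry fun (k : ι) (i : ℕ) => x k ^ (i + 1) / (i + 1)) := by
    rw [← summable_abs_iff]
    refine (summable_prod_of_nonneg (fun p => abs_nonneg _)).2 ⟨fun k => ?_, ?_⟩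
    · exact Summable.of_nonneg_of_le (fun i => abs_nonneg _) (hbound k) (hgs k)
    · refine Summable.of_nonneg_of_le (fun k => tsum_nonneg fun i => abs_nonneg _)
        (fun k => ?_) (hs.div_const (1 - r))
      calc ∑' i : ℕ, |x k ^ (i + 1) / ((i : ℝ) + 1)|
          ≤ ∑' i : ℕ, |x k| * |x k| ^ i := by
            refine Summable.tsum_le_tsum (hbound k) ?_ (hgs k)
            exact Summable.of_nonneg_of_le (fun i => abs_nonneg _) (hbound k) (hgs k)
          _ = |x k| * (1 - |x k|)⁻¹ := by
            rw [tsum_mul_left, tsum_geometric_of_lt_one (abs_nonneg _) (hx1 k)]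
          _ ≤ |x k| / (1 - r) := by
            rw [div_eq_mul_inv]
            exact mul_le_mul_of_nonneg_left
              (inv_anti₀ hrpos (by linarith [hxr k])) (abs_nonneg _)
  rw [Summable.tsum_comm hF]
  refine tsum_congr fun k => ?_
  rw [Real.log_inv, ← (Real.hasSum_pow_div_log_of_abs_lt_one (hx1 k)).tsum_eq]

set_option maxHeartbeats 2000000 in
/-- Zeta function of the classifying stack of the exceptional group `G₂`:
for real `q > 1` and `|t| < q^{14}`,
`ζ_{BG₂}(t) = exp(∑_{i≥1} (tⁱ/i) (q^{14i}(1-q^{-2i})(1-q^{-6i}))⁻¹)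
  = ∏_{k₁,k₂ ≥ 1} (1 - q^{-(2k₁+6k₂+6)} t)⁻¹`.
Pairs of positive integers `(k₁,k₂)` are encoded as `k : ℕ × ℕ` via `kⱼ = k.j + 1`. -/
theorem zeta_BG2 (q : ℝ) (hq : 1 < q) (t : ℝ) (ht : |t| < q ^ (14 : ℕ)) :
    Multipliable (fun k : ℕ × ℕ =>
      (1 - q ^ (-(2 * ((k.1 : ℤ) + 1) + 6 * ((k.2 : ℤ) + 1) + 6)) * t)⁻¹) ∧
    Real.exp (∑' i : ℕ, (t ^ (i + 1) / (i + 1)) *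
        (q ^ (14 * (i + 1)) * (1 - q ^ (-(2 * ((i : ℤ) + 1)))) *
          (1 - q ^ (-(6 * ((i : ℤ) + 1)))))⁻¹) =
      ∏' k : ℕ × ℕ, (1 - q ^ (-(2 * ((k.1 : ℤ) + 1) + 6 * ((k.2 : ℤ) + 1) + 6)) * t)⁻¹ := by
  have hq0 : (0:ℝ) < q := lt_trans one_pos hq
  have hqne : q ≠ 0 := ne_of_gt hq0
  set X : ℕ × ℕ → ℝ :=
    fun k => q ^ (-(2 * ((k.1 : ℤ) + 1) + 6 * ((k.2 : ℤ) + 1) + 6)) * t with hXdef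
  set r : ℝ := q ^ (-14 : ℤ) * |t| with hrdef
  have h14 : q ^ (-14 : ℤ) = (q ^ (14 : ℕ))⁻¹ := by
    rw [show (-14 : ℤ) = -((14:ℕ):ℤ) by norm_num, zpow_neg, zpow_natCast]
  have hr : r < 1 := by
    rw [hrdef, h14, ← div_eq_inv_mul]
    exact (div_lt_one (by positivity)).mpr ht
  have hxr : ∀ k : ℕ × ℕ, |X k| ≤ r := by
    intro k
    rw [hXdef, abs_mul, abs_of_pos (zpow_pos hq0 _), hrdef]
    refine mul_le_mul_of_nonneg_right (zpow_le_zpow_right₀ hq.le ?_) (abs_nonneg t)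
    omega
  have hu2 : (0:ℝ) ≤ q ^ (-2 : ℤ) := (zpow_pos hq0 _).le
  have hu2' : q ^ (-2 : ℤ) < 1 := zpow_lt_one_of_neg₀ hq (by norm_num)
  have hu6 : (0:ℝ) ≤ q ^ (-6 : ℤ) := (zpow_pos hq0 _).le
  have hu6' : q ^ (-6 : ℤ) < 1 := zpow_lt_one_of_neg₀ hq (by norm_num)
  have hr0 : 0 ≤ r := mul_nonneg (zpow_pos hq0 _).le (abs_nonneg t)
  have hXabs : ∀ k : ℕ × ℕ,
      |X k| = (q ^ (-2:ℤ)) ^ k.1 * ((q ^ (-6:ℤ)) ^ k.2 * r) := by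
    intro k
    rw [hXdef, hrdef, abs_mul, abs_of_pos (zpow_pos hq0 _),
      ← zpow_natCast (q ^ (-2:ℤ)) k.1, ← zpow_natCast (q ^ (-6:ℤ)) k.2,
      ← zpow_mul, ← zpow_mul]
    rw [show (q:ℝ) ^ ((-2:ℤ) * (k.1:ℤ)) * (q ^ ((-6:ℤ) * (k.2:ℤ)) * (q ^ (-14:ℤ) * |t|))
        = q ^ ((-2:ℤ) * (k.1:ℤ) + ((-6:ℤ) * (k.2:ℤ) + (-14))) * |t| by
      rw [zpow_add₀ hqne, zpow_add₀ hqne]; ring]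
    congr 2
    push_cast
    ring
  have hs : Summable fun k : ℕ × ℕ => |X k| := by
    have : Summable fun k : ℕ × ℕ =>
        (q ^ (-2:ℤ)) ^ k.1 * ((q ^ (-6:ℤ)) ^ k.2 * r) := by
      refine Summable.mul_of_nonneg (summable_geometric_of_lt_one hu2 hu2')
        ((summable_geometric_of_lt_one hu6 hu6').mul_right r) ?_ ?_
      · exact fun n => pow_nonneg hu2 n
      · exact fun n => mul_nonneg (pow_nonneg hu6 n) hr0
    exact this.congr fun k => (hXabs k).symm
  obtain ⟨h1, h2⟩ := eulerAux X r hr hxr hs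
  refine ⟨h1, ?_⟩
  rw [← h2]
  congr 1
  refine tsum_congr fun i => ?_
  -- per-i identity
  set u : ℝ := q ^ (-(2 * ((i : ℤ) + 1))) with hudef
  set v : ℝ := q ^ (-(6 * ((i : ℤ) + 1))) with hvdef
  have hu0 : 0 ≤ u := (zpow_pos hq0 _).le
  have hu1 : u < 1 := zpow_lt_one_of_neg₀ hq (by omega)
  have hv0 : 0 ≤ v := (zpow_pos hq0 _).le
  have hv1 : v < 1 := zpow_lt_one_of_neg₀ hq (by omega)
  have hterm : ∀ k : ℕ × ℕ, X k ^ (i + 1) / ((i:ℝ) + 1) =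
      u ^ k.1 * v ^ k.2 * (t ^ (i + 1) / ((i:ℝ) + 1) * ((q : ℝ) ^ (14 * (i + 1)))⁻¹) := by
    intro k
    rw [hXdef, hudef, hvdef, mul_pow,
      ← zpow_natCast (q ^ (-(2 * ((k.1 : ℤ) + 1) + 6 * ((k.2 : ℤ) + 1) + 6))) (i+1),
      ← zpow_mul,
      show (-(2 * ((k.1 : ℤ) + 1) + 6 * ((k.2 : ℤ) + 1) + 6)) * ((i+1 : ℕ) : ℤ)
        = (-(2 * ((i : ℤ) + 1))) * k.1 + ((-(6 * ((i : ℤ) + 1))) * k.2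
          + (-(((14 * (i+1) : ℕ)) : ℤ))) by push_cast; ring,
      zpow_add₀ hqne, zpow_add₀ hqne, zpow_mul, zpow_mul,
      zpow_natCast (q ^ (-(2 * ((i : ℤ) + 1)))), zpow_natCast (q ^ (-(6 * ((i : ℤ) + 1)))),
      zpow_neg q (((14 * (i+1) : ℕ)) : ℤ), zpow_natCast q (14*(i+1))]
    ring
  have hsum_u : Summable fun a : ℕ => ‖u ^ a‖ := by
    simpa [Real.norm_eq_abs, abs_of_nonneg (pow_nonneg hu0 _)]
      using summable_geometric_of_lt_one hu0 hu1
  have hsum_v : Summable fun b : ℕ => ‖v ^ b‖ := by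
    simpa [Real.norm_eq_abs, abs_of_nonneg (pow_nonneg hv0 _)]
      using summable_geometric_of_lt_one hv0 hv1
  calc (t ^ (i + 1) / ((i:ℝ) + 1)) * (q ^ (14 * (i + 1)) * (1 - u) * (1 - v))⁻¹
      = ((1 - u)⁻¹ * (1 - v)⁻¹) * (t ^ (i + 1) / ((i:ℝ) + 1) * ((q:ℝ) ^ (14 * (i + 1)))⁻¹) := by
        rw [mul_inv, mul_inv]; ring
    _ = ((∑' a : ℕ, u ^ a) * (∑' b : ℕ, v ^ b))
          * (t ^ (i + 1) / ((i:ℝ) + 1) * ((q:ℝ) ^ (14 * (i + 1)))⁻¹) := by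
        rw [tsum_geometric_of_lt_one hu0 hu1, tsum_geometric_of_lt_one hv0 hv1]
    _ = (∑' k : ℕ × ℕ, u ^ k.1 * v ^ k.2)
          * (t ^ (i + 1) / ((i:ℝ) + 1) * ((q:ℝ) ^ (14 * (i + 1)))⁻¹) := by
        rw [tsum_mul_tsum_of_summable_norm hsum_u hsum_v]
    _ = ∑' k : ℕ × ℕ, u ^ k.1 * v ^ k.2
          * (t ^ (i + 1) / ((i:ℝ) + 1) * ((q:ℝ) ^ (14 * (i + 1)))⁻¹) := (tsum_mul_right).symm
    _ = ∑' k : ℕ × ℕ, X k ^ (i + 1) / ((i:ℝ) + 1) := tsum_congr fun k => (hterm k).symm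
end

section
/- Let q > 1 be a real number and let n ≥ 2 be a natural number. For every real number t with |t| < q^{n(2n-1)}: the family (1 + (-1)^{k_1} q^{-(n k_1 + 2 k_2 + 4 k_3 + ⋯ + (2n-2) k_n + n(n-1))} t)^{-1}, indexed by tuples (k_1, …, k_n) of positive integers, is multipliable, and exp( ∑_{i=1}^∞ (t^i / i) · ( q^{n(2n-1) i} (1 - (-1)^i q^{-n i}) ∏_{j=1}^{n-1} (1 - q^{-2 j i}) )^{-1} ) = ∏_{k_1=1}^∞ ⋯ ∏_{k_n=1}^∞ (1 + (-1)^{k_1} q^{-(n k_1 + 2 k_2 + ⋯ + (2n-2) k_n + n(n-1))} t)^{-1}. (This is the zeta function formula for the classifying stack of the twisted Chevalley group ²D_n.) -/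
set_option maxHeartbeats 1000000

open Finset

private lemma zpow_finset_sum (q : ℝ) (hq : q ≠ 0) {ι : Type*} (s : Finset ι) (f : ι → ℤ) :
    ∏ j ∈ s, q ^ (f j) = q ^ (∑ j ∈ s, f j) := by
  classical
  induction s using Finset.induction_on with
  | empty => simp
  | insert _ _ h ih => rw [Finset.prod_insert h, Finset.sum_insert h, ih, zpow_add₀ hq]

private lemma zpow_pow_aux (q : ℝ) (z : ℤ) (i : ℕ) : (q ^ z) ^ i = q ^ (z * i) := by
  rw [← zpow_natCast (q ^ z) i, ← zpow_mul]

/-- The equivalence splitting off the first coordinate of a tuple. -/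
private def myFinSuccEquiv (m : ℕ) : ℕ × (Fin m → ℕ) ≃ (Fin (m + 1) → ℕ) where
  toFun p := Fin.cons p.1 p.2
  invFun k := (k 0, fun j => k j.succ)
  left_inv p := by simp
  right_inv k := Fin.cons_self_tail k

/-- Multi-dimensional geometric series over tuples of naturals. -/
private lemma pi_geom : ∀ (m : ℕ) (c : Fin m → ℝ), (∀ j, |c j| < 1) →
    Summable (fun k : Fin m → ℕ => |∏ j, c j ^ k j|) ∧
    ∑' k : Fin m → ℕ, ∏ j, c j ^ k j = ∏ j, (1 - c j)⁻¹ := by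
  intro m
  induction m with
  | zero =>
    intro c _
    constructor
    · exact ⟨_, hasSum_single (fun j => j.elim0)
        (fun b hb => absurd (funext fun j => j.elim0) hb)⟩
    · rw [tsum_eq_single (fun j => j.elim0)
        (fun b hb => absurd (funext fun j => j.elim0) hb)]
      simp
  | succ m ih =>
    intro c hc
    obtain ⟨ihS, ihT⟩ := ih (fun j => c j.succ) (fun j => hc _)
    have hg : Summable (fun k : ℕ => |c 0| ^ k) :=
      summable_geometric_of_lt_one (abs_nonneg _) (hc 0)
    have hgn : Summable (fun k : ℕ => ‖c 0 ^ k‖) :=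
      hg.congr fun k => by rw [Real.norm_eq_abs, abs_pow]
    have hSn : Summable (fun k : Fin m → ℕ => ‖∏ j, c j.succ ^ k j‖) :=
      ihS.congr fun k => by rw [Real.norm_eq_abs]
    have hsplit : ∀ p : ℕ × (Fin m → ℕ),
        ∏ j, c j ^ (myFinSuccEquiv m p) j = c 0 ^ p.1 * ∏ j : Fin m, c j.succ ^ p.2 j := by
      intro p
      rw [Fin.prod_univ_succ]
      show c 0 ^ (Fin.cons p.1 p.2 : Fin (m+1) → ℕ) 0 *
        ∏ i : Fin m, c i.succ ^ (Fin.cons p.1 p.2 : Fin (m+1) → ℕ) i.succ = _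
      simp only [Fin.cons_zero, Fin.cons_succ]
    have hPabs : Summable (fun p : ℕ × (Fin m → ℕ) => |∏ j, c j ^ (myFinSuccEquiv m p) j|) := by
      have h1 : Summable (fun p : ℕ × (Fin m → ℕ) =>
          (|c 0| ^ p.1) * |∏ j : Fin m, c j.succ ^ p.2 j|) :=
        Summable.mul_of_nonneg (f := fun k : ℕ => |c 0| ^ k)
          (g := fun k : Fin m → ℕ => |∏ j, c j.succ ^ k j|) hg ihS
          (fun k => pow_nonneg (abs_nonneg _) _) (fun k => abs_nonneg _)
      refine h1.congr fun p => ?_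
      rw [hsplit p, abs_mul, abs_pow]
    constructor
    · exact (Equiv.summable_iff (myFinSuccEquiv m)).mp hPabs
    · have h2 : ∑' k : Fin (m+1) → ℕ, ∏ j, c j ^ k j
          = ∑' p : ℕ × (Fin m → ℕ), c 0 ^ p.1 * ∏ j : Fin m, c j.succ ^ p.2 j := by
        rw [← Equiv.tsum_eq (myFinSuccEquiv m)]
        exact tsum_congr hsplit
      rw [h2, ← tsum_mul_tsum_of_summable_norm hgn hSn, ihT,
        tsum_geometric_of_norm_lt_one (by simpa [Real.norm_eq_abs] using hc 0),
        Fin.prod_univ_succ (fun j => (1 - c j)⁻¹)]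

private lemma gauss_aux : ∀ M : ℕ, (∑ j ∈ range M, (2 * ((j : ℤ) + 1))) = (M : ℤ) * ((M : ℤ) + 1) := by
  intro M
  induction M with
  | zero => simp
  | succ M ih =>
    rw [Finset.sum_range_succ, ih]
    push_cast
    ring

/-- Zeta function of the classifying stack of the twisted Chevalley (Steinberg) group `²Dₙ`
(dimension `n(2n-1)`, degrees `n, 2, 4, …, 2n-2`, Frobenius eigenvalue `-q^{-n}` on the
degree-`n` generator, so `#B²Dₙ(𝔽_{qⁱ}) = (q^{n(2n-1)i}(1-(-1)ⁱq^{-ni})∏_{j=1}^{n-1}(1-q^{-2ji}))⁻¹`):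
for real `q > 1` and `|t| < q^{n(2n-1)}`,
`ζ_{B²Dₙ}(t) = ∏_{k₁,…,kₙ ≥ 1} (1 + (-1)^{k₁} q^{-(nk₁+2k₂+⋯+(2n-2)kₙ+n(n-1))} t)⁻¹`.
Tuples of positive integers `(k₁,…,kₙ)` are encoded as `k : Fin n → ℕ` via `kⱼ = k j + 1`,
with the coordinate `k ⟨0,_⟩` carrying degree `n` and the coordinate `k j` for `j ≠ 0`
carrying degree `2j`. -/
theorem zeta_B_2Dn (q : ℝ) (hq : 1 < q) (n : ℕ) (hn : 2 ≤ n) (t : ℝ)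
    (ht : |t| < q ^ (n * (2 * n - 1))) :
    Multipliable (fun k : Fin n → ℕ =>
      (1 + (-1 : ℝ) ^ (k ⟨0, by omega⟩ + 1) *
        q ^ (-((n : ℤ) * ((k ⟨0, by omega⟩ : ℤ) + 1)
          + (∑ j : Fin n, 2 * ((j : ℕ) : ℤ) * ((k j : ℤ) + 1)) + (n * (n - 1) : ℕ))) * t)⁻¹) ∧
    Real.exp (∑' i : ℕ, (t ^ (i + 1) / (i + 1)) *
        (q ^ (n * (2 * n - 1) * (i + 1)) *
          (1 - (-1 : ℝ) ^ (i + 1) * q ^ (-((n : ℤ) * ((i : ℤ) + 1)))) *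
          ∏ j : Fin (n - 1), (1 - q ^ (-(2 * (((j : ℕ) : ℤ) + 1) * ((i : ℤ) + 1)))))⁻¹) =
      ∏' k : Fin n → ℕ,
        (1 + (-1 : ℝ) ^ (k ⟨0, by omega⟩ + 1) *
          q ^ (-((n : ℤ) * ((k ⟨0, by omega⟩ : ℤ) + 1)
            + (∑ j : Fin n, 2 * ((j : ℕ) : ℤ) * ((k j : ℤ) + 1)) + (n * (n - 1) : ℕ))) * t)⁻¹ := by
  obtain ⟨m, rfl⟩ : ∃ m, n = m + 1 := ⟨n - 1, by omega⟩
  have hm : 1 ≤ m := by omega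
  have hq0 : (0:ℝ) < q := lt_trans one_pos hq
  have hqne : q ≠ 0 := ne_of_gt hq0
  set N : ℕ := (m + 1) * (2 * (m + 1) - 1) with hN
  -- the base of the multi-geometric series
  set d : Fin (m + 1) → ℝ := fun j =>
    if (j : ℕ) = 0 then -(q ^ (-((m : ℤ) + 1))) else q ^ (-(2 * ((j : ℕ) : ℤ))) with hd
  have hzp : ∀ z : ℤ, (0:ℝ) < q ^ z := fun z => zpow_pos hq0 z
  have habs_zpow : ∀ z : ℤ, |q ^ z| = q ^ z := fun z => abs_of_pos (hzp z)
  have hqlt1 : ∀ z : ℤ, z < 0 → q ^ z < 1 := fun z hz => zpow_lt_one_of_neg₀ hq hz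
  have hd0 : d 0 = -(q ^ (-((m : ℤ) + 1))) := by simp [hd]
  have hds : ∀ j : Fin m, d j.succ = q ^ (-(2 * (((j : ℕ) : ℤ) + 1))) := by
    intro j
    have h1 : ((j.succ : Fin (m+1)) : ℕ) = (j : ℕ) + 1 := rfl
    have h7 : -(2 * ((((j : ℕ) + 1) : ℕ) : ℤ)) = -(2 * (((j : ℕ) : ℤ) + 1)) := by
      push_cast
      ring
    simp only [hd, h1]
    rw [if_neg (by omega), h7]
  have hdlt : ∀ j, |d j| < 1 := by
    intro j
    by_cases h : (j : ℕ) = 0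
    · simp only [hd, h, if_pos]
      rw [abs_neg, habs_zpow]
      exact hqlt1 _ (by omega)
    · simp only [hd, h, if_false]
      rw [habs_zpow]
      exact hqlt1 _ (by omega)
  have hdle : ∀ j, |d j| ≤ 1 := fun j => (hdlt j).le
  -- the factors of the infinite product
  set x : (Fin (m + 1) → ℕ) → ℝ :=
    fun k => t * q ^ (-(N : ℤ)) * ∏ j, d j ^ k j with hx
  set r : ℝ := |t| * q ^ (-(N : ℤ)) with hr
  have hr0 : 0 ≤ r := mul_nonneg (abs_nonneg _) (hzp _).le
  have hr1 : r < 1 := by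
    have h1 : |t| * q ^ (-(N : ℤ)) < q ^ (N : ℕ) * q ^ (-(N : ℤ)) :=
      mul_lt_mul_of_pos_right ht (hzp _)
    have h2 : q ^ (N : ℕ) * q ^ (-(N : ℤ)) = 1 := by
      rw [← zpow_natCast q N, ← zpow_add₀ hqne]
      simp
    rw [hr]
    rw [h2] at h1
    exact h1
  have hxabs : ∀ k, |x k| = r * ∏ j, |d j| ^ k j := by
    intro k
    rw [hx, hr]
    simp only
    rw [abs_mul, abs_mul, habs_zpow, Finset.abs_prod]
    congr 1
    exact Finset.prod_congr rfl fun j _ => abs_pow _ _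
  have hprodnn : ∀ k : Fin (m + 1) → ℕ, 0 ≤ ∏ j, |d j| ^ k j :=
    fun k => Finset.prod_nonneg fun j _ => pow_nonneg (abs_nonneg _) _
  have hprodle : ∀ k : Fin (m + 1) → ℕ, ∏ j, |d j| ^ k j ≤ 1 :=
    fun k => Finset.prod_le_one (fun j _ => pow_nonneg (abs_nonneg _) _)
      (fun j _ => pow_le_one₀ (abs_nonneg _) (hdle j))
  have hxler : ∀ k, |x k| ≤ r := by
    intro k
    rw [hxabs k]
    exact mul_le_of_le_one_right hr0 (hprodle k)
  have hxlt : ∀ k, |x k| < 1 := fun k => lt_of_le_of_lt (hxler k) hr1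
  have hxpos : ∀ k, 0 < 1 - x k := fun k => by
    have := (abs_lt.mp (hxlt k)).2; linarith
  -- value of the product ∏ d j ^ k j
  have hprod_d : ∀ k : Fin (m + 1) → ℕ, ∏ j, d j ^ k j
      = (-1 : ℝ) ^ (k 0) *
        q ^ (-(((m : ℤ) + 1) * (k 0 : ℤ)
            + ∑ j : Fin m, 2 * (((j : ℕ) : ℤ) + 1) * (k j.succ : ℤ))) := by
    intro k
    rw [Fin.prod_univ_succ (fun j => d j ^ k j)]
    have h1 : d 0 ^ k 0 = (-1 : ℝ) ^ (k 0) * q ^ (-((m : ℤ) + 1) * (k 0 : ℤ)) := by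
      rw [hd0, neg_pow, zpow_pow_aux]
    have h2 : ∏ j : Fin m, d j.succ ^ k j.succ
        = q ^ (∑ j : Fin m, -(2 * (((j : ℕ) : ℤ) + 1)) * (k j.succ : ℤ)) := by
      rw [← zpow_finset_sum q hqne]
      exact Finset.prod_congr rfl fun j _ => by rw [hds j, zpow_pow_aux]
    have h8 : (∑ j : Fin m, -(2 * (((j : ℕ) : ℤ) + 1)) * (k j.succ : ℤ))
        = -∑ j : Fin m, 2 * (((j : ℕ) : ℤ) + 1) * (k j.succ : ℤ) := by
      rw [← Finset.sum_neg_distrib]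
      exact Finset.sum_congr rfl fun j _ => by ring
    rw [h1, h2, mul_assoc, ← zpow_add₀ hqne]
    congr 2
    rw [h8]
    ring
  -- Gauss sum over Fin m
  have hGaussFin : (∑ j : Fin m, 2 * (((j : ℕ) : ℤ) + 1)) = (m : ℤ) * ((m : ℤ) + 1) := by
    rw [Fin.sum_univ_eq_sum_range (fun i => 2 * ((i : ℤ) + 1)) m]
    exact gauss_aux m
  have hNZ : ((N : ℕ) : ℤ) = ((m : ℤ) + 1) * (2 * (m : ℤ) + 1) := by
    rw [hN]
    have h4 : 2 * (m + 1) - 1 = 2 * m + 1 := by omega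
    rw [h4]
    push_cast
    ring
  -- the exponent identity
  have hE : ∀ k : Fin (m+1) → ℕ,
      -(((m+1 : ℕ) : ℤ) * ((k 0 : ℤ) + 1)
          + (∑ j : Fin (m+1), 2 * ((j : ℕ) : ℤ) * ((k j : ℤ) + 1)) + ((m+1) * (m+1-1) : ℕ))
      = -(N : ℤ) + -(((m : ℤ) + 1) * (k 0 : ℤ)
          + ∑ j : Fin m, 2 * (((j : ℕ) : ℤ) + 1) * (k j.succ : ℤ)) := by
    intro k
    have h1 : (∑ j : Fin (m+1), 2 * ((j : ℕ) : ℤ) * ((k j : ℤ) + 1))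
        = (∑ j : Fin m, 2 * (((j : ℕ) : ℤ) + 1) * (k j.succ : ℤ)) + (m : ℤ) * ((m : ℤ) + 1) := by
      rw [Fin.sum_univ_succ (fun j => 2 * ((j : ℕ) : ℤ) * ((k j : ℤ) + 1))]
      have h5 : ∀ j : Fin m, 2 * (((j.succ : Fin (m+1)) : ℕ) : ℤ) * ((k j.succ : ℤ) + 1)
          = 2 * (((j : ℕ) : ℤ) + 1) * (k j.succ : ℤ) + 2 * (((j : ℕ) : ℤ) + 1) := by
        intro j
        have h6 : ((j.succ : Fin (m+1)) : ℕ) = (j : ℕ) + 1 := rfl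
        rw [h6]
        push_cast
        ring
      rw [Finset.sum_congr rfl fun j _ => h5 j, Finset.sum_add_distrib, hGaussFin]
      simp
    have h2 : (((m+1) * (m+1-1) : ℕ) : ℤ) = ((m : ℤ) + 1) * (m : ℤ) := by
      have : m + 1 - 1 = m := rfl
      rw [this]
      push_cast
      ring
    rw [h1, h2, hNZ]
    push_cast
    ring
  -- identification of the factors of the product
  have hterm : ∀ k : Fin (m+1) → ℕ,
      (1 + (-1 : ℝ) ^ (k ⟨0, by omega⟩ + 1) *
        q ^ (-(((m+1 : ℕ) : ℤ) * ((k ⟨0, by omega⟩ : ℤ) + 1)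
          + (∑ j : Fin (m+1), 2 * ((j : ℕ) : ℤ) * ((k j : ℤ) + 1)) + ((m+1) * (m+1-1) : ℕ))) * t)⁻¹
      = (1 - x k)⁻¹ := by
    intro k
    simp only [Fin.zero_eta]
    congr 1
    have h5 : (-1 : ℝ) ^ (k 0 + 1) *
        q ^ (-(((m+1 : ℕ) : ℤ) * ((k 0 : ℤ) + 1)
          + (∑ j : Fin (m+1), 2 * ((j : ℕ) : ℤ) * ((k j : ℤ) + 1)) + ((m+1) * (m+1-1) : ℕ))) * t
        = -(x k) := by
      rw [hE k, zpow_add₀ hqne]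
      simp only [hx]
      rw [hprod_d k, pow_succ]
      ring
    rw [h5]
    ring
  -- the coefficient identity: each zeta coefficient is a multi-geometric sum
  have hA : ∀ i : ℕ,
      (t ^ (i + 1) / (i + 1)) *
        (q ^ (N * (i + 1)) *
          (1 - (-1 : ℝ) ^ (i + 1) * q ^ (-(((m+1 : ℕ) : ℤ) * ((i : ℤ) + 1)))) *
          ∏ j : Fin m, (1 - q ^ (-(2 * (((j : ℕ) : ℤ) + 1) * ((i : ℤ) + 1)))))⁻¹
      = ∑' k : Fin (m+1) → ℕ, x k ^ (i + 1) / ((i : ℝ) + 1) := by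
    intro i
    have hc : ∀ j : Fin (m+1), |(fun j => d j ^ (i+1)) j| < 1 := by
      intro j
      simp only [abs_pow]
      exact pow_lt_one₀ (abs_nonneg _) (hdlt j) (Nat.succ_ne_zero i)
    obtain ⟨-, hT⟩ := pi_geom (m+1) (fun j => d j ^ (i+1)) hc
    have hT' : ∑' k : Fin (m+1) → ℕ, ∏ j, (d j ^ (i+1)) ^ k j
        = ∏ j : Fin (m+1), (1 - d j ^ (i+1))⁻¹ := hT
    have hrw : ∀ k : Fin (m+1) → ℕ, x k ^ (i + 1) / ((i : ℝ) + 1)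
        = ((t * q ^ (-(N : ℤ))) ^ (i + 1) / ((i : ℝ) + 1)) * ∏ j, (d j ^ (i+1)) ^ k j := by
      intro k
      simp only [hx]
      rw [mul_pow, ← Finset.prod_pow]
      rw [Finset.prod_congr rfl fun j _ => pow_right_comm (d j) (k j) (i+1)]
      ring
    rw [tsum_congr hrw, tsum_mul_left, hT',
      Fin.prod_univ_succ (fun j => (1 - d j ^ (i+1))⁻¹)]
    have hA0 : d 0 ^ (i+1) = (-1 : ℝ) ^ (i + 1) * q ^ (-(((m+1 : ℕ) : ℤ) * ((i : ℤ) + 1))) := by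
      have he : (-((m : ℤ) + 1)) * ((i+1 : ℕ) : ℤ) = -(((m+1 : ℕ) : ℤ) * ((i : ℤ) + 1)) := by
        push_cast
        ring
      rw [hd0, neg_pow, zpow_pow_aux, he]
    have hBrw : ∏ j : Fin m, (1 - d j.succ ^ (i+1))⁻¹
        = (∏ j : Fin m, (1 - q ^ (-(2 * (((j : ℕ) : ℤ) + 1) * ((i : ℤ) + 1)))))⁻¹ := by
      rw [← Finset.prod_inv_distrib]
      refine Finset.prod_congr rfl fun j _ => ?_
      have he2 : (-(2 * (((j : ℕ) : ℤ) + 1))) * ((i+1 : ℕ) : ℤ)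
          = -(2 * (((j : ℕ) : ℤ) + 1) * ((i : ℤ) + 1)) := by
        push_cast
        ring
      rw [hds j, zpow_pow_aux, he2]
    have hNq : (q ^ (-(N : ℤ))) ^ (i+1) = (q ^ (N * (i + 1)))⁻¹ := by
      have he3 : (-(N : ℤ)) * ((i+1 : ℕ) : ℤ) = -((N * (i + 1) : ℕ) : ℤ) := by
        push_cast
        ring
      rw [zpow_pow_aux, he3, zpow_neg, zpow_natCast]
    rw [hA0, hBrw, mul_pow, hNq, mul_inv, mul_inv]
    ring
  -- double summability
  have hG : Summable (fun k : Fin (m+1) → ℕ => ∏ j, |d j| ^ k j) := by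
    have hcc : ∀ j : Fin (m+1), |(fun j => |d j|) j| < 1 := by
      intro j
      simp only [abs_abs]
      exact hdlt j
    have h7 := (pi_geom (m+1) (fun j => |d j|) hcc).1
    exact h7.congr fun k => abs_of_nonneg (hprodnn k)
  have hf_unc : Summable (Function.uncurry
      (fun (k : Fin (m+1) → ℕ) (i : ℕ) => x k ^ (i + 1) / ((i : ℝ) + 1))) := by
    have hRsum : Summable (fun i : ℕ => r ^ (i+1)) :=
      ((summable_geometric_of_lt_one hr0 hr1).mul_left r).congr fun i => (pow_succ' r i).symm
    have hGR : Summable (fun p : (Fin (m+1) → ℕ) × ℕ =>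
        (∏ j, |d j| ^ p.1 j) * r ^ (p.2 + 1)) :=
      hG.mul_of_nonneg hRsum (fun k => hprodnn k) (fun i => pow_nonneg hr0 _)
    refine Summable.of_norm_bounded hGR ?_
    rintro ⟨k, i⟩
    simp only [Function.uncurry]
    rw [Real.norm_eq_abs, abs_div, abs_pow]
    have hden : (1 : ℝ) ≤ |(i : ℝ) + 1| := by
      rw [abs_of_pos (by positivity)]
      have : (0:ℝ) ≤ (i : ℝ) := Nat.cast_nonneg i
      linarith
    have hstep1 : |x k| ^ (i+1) / |(i : ℝ) + 1| ≤ |x k| ^ (i+1) :=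
      div_le_self (pow_nonneg (abs_nonneg _) _) hden
    have hstep2 : |x k| ^ (i+1) ≤ (∏ j, |d j| ^ k j) * r ^ (i + 1) := by
      rw [hxabs k, mul_pow]
      calc r ^ (i+1) * (∏ j, |d j| ^ k j) ^ (i+1)
          ≤ r ^ (i+1) * (∏ j, |d j| ^ k j) := by
            refine mul_le_mul_of_nonneg_left ?_ (pow_nonneg hr0 _)
            exact pow_le_of_le_one (hprodnn k) (hprodle k) (Nat.succ_ne_zero i)
        _ = (∏ j, |d j| ^ k j) * r ^ (i+1) := by ring
    exact le_trans hstep1 hstep2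
  have hswap : (∑' (i : ℕ), ∑' (k : Fin (m+1) → ℕ), x k ^ (i + 1) / ((i : ℝ) + 1))
      = ∑' (k : Fin (m+1) → ℕ), ∑' (i : ℕ), x k ^ (i + 1) / ((i : ℝ) + 1) :=
    hf_unc.tsum_comm
  have hlog : ∀ k : Fin (m+1) → ℕ,
      (∑' (i : ℕ), x k ^ (i + 1) / ((i : ℝ) + 1)) = Real.log ((1 - x k)⁻¹) := by
    intro k
    rw [(Real.hasSum_pow_div_log_of_abs_lt_one (hxlt k)).tsum_eq, Real.log_inv]
  have hsumlog : Summable (fun k : Fin (m+1) → ℕ => Real.log ((1 - x k)⁻¹)) := by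
    have := hf_unc.prod
    exact this.congr fun k => hlog k
  have hposinv : ∀ (_ : Unit) (k : Fin (m+1) → ℕ),
      0 < (fun (k : Fin (m+1) → ℕ) (_ : Unit) => (1 - x k)⁻¹) k () :=
    fun _ k => inv_pos.mpr (hxpos k)
  have hexp := Real.rexp_tsum_eq_tprod (f := fun (k : Fin (m+1) → ℕ) => (1 - x k)⁻¹)
    (fun k => inv_pos.mpr (hxpos k)) hsumlog
  have hexp' : Real.exp (∑' k : Fin (m+1) → ℕ, Real.log ((1 - x k)⁻¹))
      = ∏' k : Fin (m+1) → ℕ, (1 - x k)⁻¹ := hexp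
  have hmult : Multipliable (fun k : Fin (m+1) → ℕ => (1 - x k)⁻¹) :=
    Real.multipliable_of_summable_log
      (fun k => inv_pos.mpr (hxpos k)) hsumlog
  constructor
  · exact hmult.congr fun k => (hterm k).symm
  · calc Real.exp (∑' i : ℕ, (t ^ (i + 1) / (i + 1)) *
        (q ^ (N * (i + 1)) *
          (1 - (-1 : ℝ) ^ (i + 1) * q ^ (-(((m+1 : ℕ) : ℤ) * ((i : ℤ) + 1)))) *
          ∏ j : Fin (m + 1 - 1), (1 - q ^ (-(2 * (((j : ℕ) : ℤ) + 1) * ((i : ℤ) + 1)))))⁻¹)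
        = Real.exp (∑' k : Fin (m+1) → ℕ, Real.log ((1 - x k)⁻¹)) := by
          show Real.exp (∑' i : ℕ, (t ^ (i + 1) / (i + 1)) *
            (q ^ (N * (i + 1)) *
              (1 - (-1 : ℝ) ^ (i + 1) * q ^ (-(((m+1 : ℕ) : ℤ) * ((i : ℤ) + 1)))) *
              ∏ j : Fin m, (1 - q ^ (-(2 * (((j : ℕ) : ℤ) + 1) * ((i : ℤ) + 1)))))⁻¹)
            = Real.exp (∑' k : Fin (m+1) → ℕ, Real.log ((1 - x k)⁻¹))
          rw [tsum_congr hA, hswap, tsum_congr hlog]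
      _ = ∏' k : Fin (m+1) → ℕ, (1 - x k)⁻¹ := hexp'
      _ = _ := tprod_congr fun k => (hterm k).symm
end
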